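/- Let A be a cosimplicial abelian group. For fixed k and n with k ≤ n-1, the map s : A^n → M_k^{n-1}A given by a ↦ (s^0 a, ..., s^k a) is surjective, where M_k^{n-1}A is the set of tuples (a_0,...,a_k) in A^{n-1} with s^i a_j = s^{j-1} a_i for i < j. -/
import Mathlib


/-- A cosimplicial abelian group, given by abelian groups `A n` for `n : ℕ` together with
coface homomorphisms `d n i : A n →+ A (n+1)` (the map `d^i`, meaningful for `i ≤ n+1`) and
codegeneracy homomorphisms `s n i : A (n+1) →+ A n` (the map `s^i`, meaningful for `i ≤ n`),
subject to the standard cosimplicial identities. -/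
structure CosAb (A : ℕ → Type) [∀ n, AddCommGroup (A n)] : Type where
  d : ∀ n : ℕ, ℕ → (A n →+ A (n + 1))
  s : ∀ n : ℕ, ℕ → (A (n + 1) →+ A n)
  /-- `d^{j+1} ∘ d^i = d^i ∘ d^j` for `i ≤ j` (i.e. `d^j d^i = d^i d^{j-1}` for `i < j`). -/
  dd : ∀ n i j : ℕ, i ≤ j → j ≤ n + 1 →
    (d (n + 1) (j + 1)).comp (d n i) = (d (n + 1) i).comp (d n j)
  /-- `s^i d^i = id`. -/
  sd_self : ∀ n i : ℕ, i ≤ n → (s n i).comp (d n i) = AddMonoidHom.id (A n)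
  /-- `s^i d^{i+1} = id`. -/
  sd_succ : ∀ n i : ℕ, i ≤ n → (s n i).comp (d n (i + 1)) = AddMonoidHom.id (A n)
  /-- `s^{j+1} d^i = d^i s^j` for `i ≤ j` (i.e. `s^j d^i = d^i s^{j-1}` for `i < j`). -/
  sd_lt : ∀ n i j : ℕ, i ≤ j → j ≤ n →
    (s (n + 1) (j + 1)).comp (d (n + 1) i) = (d n i).comp (s n j)
  /-- `s^j d^i = d^{i-1} s^j` for `i > j + 1`. -/
  sd_gt : ∀ n i j : ℕ, j + 1 < i → i ≤ n + 2 →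
    (s (n + 1) j).comp (d (n + 1) i) = (d n (i - 1)).comp (s n j)
  /-- `s^j s^i = s^i s^{j+1}` for `i ≤ j`. -/
  ss : ∀ n i j : ℕ, i ≤ j → j ≤ n →
    (s n j).comp (s (n + 1) i) = (s n i).comp (s (n + 1) (j + 1))

/-- The partial matching condition on a tuple `(a_0, …, a_k)` of elements of `A^n`
(the tuples making up `M_k^{n-1}A` at top level `n+1`): `s^i a_j = s^{j-1} a_i` for `i < j`. -/
def MatchKTuple {A : ℕ → Type} [∀ n, AddCommGroup (A n)] (C : CosAb A) (n k : ℕ)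
    (v : Fin (k + 1) → A n) : Prop :=
  ∀ (m : ℕ) (hm : n = m + 1) (i j : Fin (k + 1)), (i : ℕ) < (j : ℕ) →
    C.s m i (cast (congrArg A hm) (v j)) = C.s m ((j : ℕ) - 1) (cast (congrArg A hm) (v i))

/-- For a cosimplicial abelian group `A` and `k ≤ n - 1` (here stated with top
level `n+1`, so the condition is `k ≤ n`), the map `s : A^{n+1} → M_k^n A`,
`a ↦ (s^0 a, …, s^k a)`, is surjective onto the set of partial matching tuples. -/
theorem partial_matching_map_surjective
    (A : ℕ → Type) [∀ n, AddCommGroup (A n)] (C : CosAb A) (n k : ℕ) (hk : k ≤ n)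
    (v : Fin (k + 1) → A n) (hv : MatchKTuple C n k v) :
    ∃ a : A (n + 1), ∀ i : Fin (k + 1), C.s n i a = v i := by

  induction k with
  | zero =>
    refine ⟨C.d n 0 (v 0), fun i => ?_⟩
    fin_cases i
    simpa using DFunLike.congr_fun (C.sd_self n 0 (Nat.zero_le n)) (v 0)
  | succ k ih =>
    obtain ⟨m, rfl⟩ : ∃ m, n = m + 1 := ⟨n - 1, by omega⟩
    obtain ⟨a, ha⟩ := ih (by omega) (fun i => v i.castSucc)
      (fun m' hm i j hij => hv m' hm i.castSucc j.castSucc hij)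
    set w : A (m + 1) := C.s (m + 1) (k + 1) a - v ⟨k + 1, by omega⟩ with hw
    refine ⟨a - C.d (m + 1) (k + 2) w, fun i => ?_⟩
    rcases Nat.lt_succ_iff_lt_or_eq.mp i.isLt with hi | hi
    · -- i < k + 1
      have h1 : C.s (m + 1) i (C.d (m + 1) (k + 2) w) = C.d m (k + 1) (C.s m i w) := by
        have := DFunLike.congr_fun (C.sd_gt m (k + 2) i (by omega) (by omega)) w
        simpa using this
      have h2 : C.s m i w = 0 := by
        have hss := DFunLike.congr_fun (C.ss m i k (by omega) (by omega)) a
        have hmatch := hv m rfl ⟨i, by omega⟩ ⟨k + 1, by omega⟩ (by simpa using hi)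
        simp only [cast_eq] at hmatch
        have hva : C.s (m + 1) i a = v ⟨i, by omega⟩ := by
          have := ha ⟨i, hi⟩
          simpa [Fin.castSucc, Fin.castAdd, Fin.castLE] using this
        simp only [AddMonoidHom.coe_comp, Function.comp_apply] at hss
        have hi' : (⟨(i : ℕ), by omega⟩ : Fin (k + 2)) = i := by ext; rfl
        rw [hw, map_sub, ← hss, hva, hi', hmatch, hi']
        simp
      rw [map_sub, h1, h2, map_zero, sub_zero]
      have := ha ⟨i, hi⟩
      have hi' : (⟨(i : ℕ), by omega⟩ : Fin (k + 2)) = i := by ext; rfl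
      simpa [Fin.castSucc, Fin.castAdd, Fin.castLE, hi'] using this
    · -- i = k + 1
      have h1 : C.s (m + 1) i (C.d (m + 1) (k + 2) w) = w := by
        have := DFunLike.congr_fun (C.sd_succ (m + 1) (k + 1) (by omega)) w
        rw [hi]
        simpa using this
      have hi' : i = ⟨k + 1, by omega⟩ := by ext; exact hi
      rw [map_sub, h1, hw, hi']
      simp [hi]
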